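/- Let k ≥ 2 and let a_1,…,a_k be nonzero real numbers with a_0 := 0 and a_{k+1} := 0 (with the convention that in the term for i = k the expression a_{k-1}+2a_k+a_{k+1} is replaced by a_{k-1}+a_k when appropriate). Then in the polynomial ring ℝ[α_1,…,α_k,λ_1,…,λ_k] the following identity holds: α_1^2 + … + α_k^2 − a_1λ_1 − … − a_kλ_k = −Σ_{i=1}^{k} (a_i/(a_{i-1}+2a_i+a_{i+1}))·[det(a_{i-1}+a_i, α_i+α_{i+1}; α_i, λ_i) + det(a_i+a_{i+1}, α_i+α_{i+1}; α_{i+1}, λ_i)] + Σ_{i=1}^{k-1} (a_i·det(a_{i-1}+a_i, a_i+a_{i+1}; α_i, α_{i+1})^2) / ((a_{i-1}+2a_i+a_{i+1})(a_{i-1}+a_i)(a_i+a_{i+1})), where α_{k+1} := 0. -/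

import Mathlib

private lemma icc_to_range (n : ℕ) (f : ℕ → ℝ) :
    ∑ i ∈ Finset.Icc 1 n, f i = ∑ i ∈ Finset.range n, f (i + 1) := by
  rw [show Finset.Icc 1 n = Finset.Ico 1 (n+1) by rfl, Finset.sum_Ico_eq_sum_range]
  simp [Nat.add_comm]

private lemma perterm (A A' b c D lamv al be : ℝ) (hb : b ≠ 0) (hc : c ≠ 0)
    (hD : D ≠ 0) (hbc : D = b + c) (hca : c = A + A') :
    -(A / D * ((b * lamv - (al + be) * al) + (c * lamv - (al + be) * be)))
      + A * (b * be - c * al) ^ 2 / (D * b * c)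
    = -(A * lamv) + be ^ 2 + (A * al ^ 2 / b - A' * be ^ 2 / c) := by
  subst hbc; subst hca
  field_simp
  ring

theorem stmt_2 (k : ℕ) (hk : 2 ≤ k) (a : ℕ → ℝ)
    (ha0 : a 0 = 0) (hak1 : a (k + 1) = 0)
    (hne : ∀ i, 1 ≤ i → i ≤ k → a i ≠ 0)
    (hden : ∀ i, 1 ≤ i → i ≤ k →
      a (i - 1) + a i ≠ 0 ∧ a i + a (i + 1) ≠ 0 ∧
      (if i = k then a (k - 1) + a k else a (i - 1) + 2 * a i + a (i + 1)) ≠ 0) :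
    ∀ α lam : ℕ → ℝ, α (k + 1) = 0 →
      (∑ i ∈ Finset.Icc 1 k, (α i) ^ 2) - (∑ i ∈ Finset.Icc 1 k, a i * lam i) =
        -(∑ i ∈ Finset.Icc 1 k,
            (a i / (if i = k then a (k - 1) + a k else a (i - 1) + 2 * a i + a (i + 1))) *
              (Matrix.det !![a (i - 1) + a i, α i + α (i + 1); α i, lam i] +
                if i = k then 0 else
                  Matrix.det !![a i + a (i + 1), α i + α (i + 1); α (i + 1), lam i]))
        + ∑ i ∈ Finset.Icc 1 (k - 1),
            a i * (Matrix.det !![a (i - 1) + a i, a i + a (i + 1); α i, α (i + 1)]) ^ 2 /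
              ((if i = k then a (k - 1) + a k else a (i - 1) + 2 * a i + a (i + 1)) *
                (a (i - 1) + a i) * (a i + a (i + 1))) := by
  obtain ⟨m, rfl⟩ : ∃ m, k = m + 1 := ⟨k - 1, by omega⟩
  have hm : 1 ≤ m := by omega
  intro α lam hα
  have hb : ∀ x, x ≤ m → a x + a (x + 1) ≠ 0 := fun x hx => by
    simpa using (hden (x + 1) (by omega) (by omega)).1
  have hD : ∀ x, x < m → a x + 2 * a (x + 1) + a (x + 1 + 1) ≠ 0 := fun x hx => by
    have h := (hden (x + 1) (by omega) (by omega)).2.2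
    rw [if_neg (by omega)] at h
    simpa using h
  simp only [Matrix.det_fin_two_of, icc_to_range, Nat.add_sub_cancel]
  rw [Finset.sum_range_succ, Finset.sum_range_succ, Finset.sum_range_succ]
  simp only [eq_self_iff_true, if_true, hα, hak1, add_zero]
  have hTS :
      -(∑ x ∈ Finset.range m,
          (a (x + 1) / if x + 1 = m + 1 then a m + a (m + 1)
              else a x + 2 * a (x + 1) + a (x + 1 + 1)) *
            ((a x + a (x + 1)) * lam (x + 1) - (α (x + 1) + α (x + 1 + 1)) * α (x + 1) +
              if x + 1 = m + 1 then 0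
              else (a (x + 1) + a (x + 1 + 1)) * lam (x + 1) -
                (α (x + 1) + α (x + 1 + 1)) * α (x + 1 + 1)))
        + ∑ x ∈ Finset.range m,
            a (x + 1) * ((a x + a (x + 1)) * α (x + 1 + 1)
                - (a (x + 1) + a (x + 1 + 1)) * α (x + 1)) ^ 2 /
              ((if x + 1 = m + 1 then a m + a (m + 1)
                  else a x + 2 * a (x + 1) + a (x + 1 + 1)) * (a x + a (x + 1)) *
                (a (x + 1) + a (x + 1 + 1)))
      = -(∑ x ∈ Finset.range m, a (x + 1) * lam (x + 1))
          + (∑ x ∈ Finset.range m, α (x + 1 + 1) ^ 2)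
          + ((a (0 + 1) * α (0 + 1) ^ 2 / (a 0 + a (0 + 1)))
              - (a (m + 1) * α (m + 1) ^ 2 / (a m + a (m + 1)))) := by
    rw [← Finset.sum_neg_distrib, ← Finset.sum_add_distrib,
      ← Finset.sum_range_sub' (fun j => a (j + 1) * α (j + 1) ^ 2 / (a j + a (j + 1))) m,
      ← Finset.sum_neg_distrib, ← Finset.sum_add_distrib, ← Finset.sum_add_distrib]
    refine Finset.sum_congr rfl fun x hx => ?_
    have hx' : x < m := Finset.mem_range.mp hx
    rw [if_neg (by omega), if_neg (by omega)]
    exact perterm (a (x + 1)) (a (x + 1 + 1)) (a x + a (x + 1)) (a (x + 1) + a (x + 1 + 1))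
      (a x + 2 * a (x + 1) + a (x + 1 + 1)) (lam (x + 1)) (α (x + 1)) (α (x + 1 + 1))
      (hb x (by omega)) (hb (x + 1) (by omega)) (hD x hx') (by ring) rfl
  have hTop : a (m + 1) / (a m + a (m + 1)) *
        ((a m + a (m + 1)) * lam (m + 1) - α (m + 1) * α (m + 1) + 0)
      = a (m + 1) * lam (m + 1) - a (m + 1) * α (m + 1) ^ 2 / (a m + a (m + 1)) := by
    field_simp [hb m le_rfl]
    ring
  have hg0 : a (0 + 1) * α (0 + 1) ^ 2 / (a 0 + a (0 + 1)) = α 1 ^ 2 := by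
    rw [ha0, zero_add]
    field_simp [hne 1 (by omega) (by omega)]
    ring
  have hshift : ∑ x ∈ Finset.range m, α (x + 1 + 1) ^ 2
      = ∑ x ∈ Finset.range m, α (x + 1) ^ 2 + α (m + 1) ^ 2 - α 1 ^ 2 := by
    have h1 := Finset.sum_range_succ' (fun x => α (x + 1) ^ 2) m
    have h2 := Finset.sum_range_succ (fun x => α (x + 1) ^ 2) m
    linarith
  rw [hshift, hg0] at hTS
  linarith [hTS, hTop]
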